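/- arXiv:1704.07475 — 2 statements merged into one kernel-verified Lean document; each statement's English description precedes it below -/
import Mathlib

section
/- Let g, V, θ be real numbers with |V - g| ≤ u for some u ≥ 0. Suppose a robot at θ moves toward g, reaching a new position θ' that lies on the segment between θ and g with |θ' - g| ≥ u. Then |θ' - V| ≤ |θ - V|, provided |θ - g| ≥ u. -/
theorem stmt1 (g V θ u s : ℝ) (hu : 0 ≤ u) (hV : |V - g| ≤ u)
    (hθ : u ≤ |θ - g|) (hs0 : 0 ≤ s) (hs1 : s ≤ |θ - g|)
    (θ' : ℝ) (hθ' : θ' = θ + s * Real.sign (g - θ))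
    (hfar : u ≤ |θ' - g|) :
    |θ' - V| ≤ |θ - V| := by
  rw [abs_le] at hV
  rcases lt_trichotomy θ g with h | h | h
  · have hsg : Real.sign (g - θ) = 1 := Real.sign_of_pos (by linarith)
    rw [hsg] at hθ'
    rw [abs_of_neg (by linarith : θ - g < 0)] at hs1 hθ
    have hθ'le : θ' ≤ g := by linarith
    rw [abs_of_nonpos (by linarith)] at hfar
    rw [abs_le, abs_of_nonpos (by linarith)]
    constructor <;> linarith
  · subst h
    simp at hθ hfar hs1 ⊢
    have : u = 0 := le_antisymm hθ hu
    subst this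
    have : s = 0 := le_antisymm hs1 hs0
    simp [this] at hθ'
    simp [hθ']
  · have hsg : Real.sign (g - θ) = -1 := Real.sign_of_neg (by linarith)
    rw [hsg] at hθ'
    rw [abs_of_pos (by linarith : 0 < θ - g)] at hs1 hθ
    have hθ'ge : g ≤ θ' := by linarith
    rw [abs_of_nonneg (by linarith)] at hfar
    rw [abs_le, abs_of_nonneg (by linarith)]
    constructor <;> linarith
end

section
/- Combining the control law step with the monotonicity lemma: under the hypotheses |V − g| ≤ u and the control law above producing θ' with |θ' − g| ≥ u and θ' between θ and g, the distance to the true Voronoi midpoint does not increase: |θ' − V| ≤ |θ − V|. -/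
theorem stmt16 (θ g V u Δt ωmax : ℝ) (hu : 0 ≤ u) (hΔt : 0 < Δt)
    (hω : 0 < ωmax) (hV : |V - g| ≤ u)
    (ω : ℝ)
    (hωdef : ω = if ωmax * Δt + u ≤ |g - θ| then ωmax
      else if |g - θ| ≤ u then 0 else (|g - θ| - u) / Δt)
    (θ' : ℝ) (hθ' : θ' = θ + ω * Δt * Real.sign (g - θ))
    (hfar : u ≤ |θ' - g|) (hmono : |θ' - g| ≤ |θ - g|) :
    |θ' - V| ≤ |θ - V| := by
  have hVb := abs_le.mp hV
  rcases lt_trichotomy θ g with h | h | h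
  · have hs : Real.sign (g - θ) = 1 := Real.sign_of_pos (by linarith)
    rw [hs, mul_one] at hθ'
    have habs : |g - θ| = g - θ := abs_of_pos (by linarith)
    rw [habs] at hωdef
    split_ifs at hωdef with h1 h2
    · have h3 : θ' ≤ V := by nlinarith
      have h4 : θ ≤ θ' := by nlinarith
      rw [abs_of_nonpos (by linarith), abs_of_nonpos (by linarith)]
      linarith
    · simp [hωdef] at hθ'; rw [hθ']
    · have hθ'' : θ' = g - u := by
        rw [hθ', hωdef]; field_simp; ring
      have h3 : θ' ≤ V := by linarith [hVb.1]
      have h4 : θ ≤ θ' := by push_neg at h2; linarith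
      rw [abs_of_nonpos (by linarith), abs_of_nonpos (by linarith)]
      linarith
  · subst h
    have hle : |θ - θ| ≤ u := by simpa using hu
    have h1 : ¬ ωmax * Δt + u ≤ |θ - θ| := by
      simp; nlinarith
    rw [if_neg h1, if_pos hle] at hωdef
    simp [hωdef] at hθ'; rw [hθ']
  · have hs : Real.sign (g - θ) = -1 := Real.sign_of_neg (by linarith)
    rw [hs] at hθ'
    have habs : |g - θ| = θ - g := by rw [abs_of_neg (by linarith)]; ring
    rw [habs] at hωdef
    split_ifs at hωdef with h1 h2
    · have h3 : V ≤ θ' := by nlinarith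
      have h4 : θ' ≤ θ := by nlinarith
      rw [abs_of_nonneg (by linarith), abs_of_nonneg (by linarith)]
      linarith
    · simp [hωdef] at hθ'; rw [hθ']
    · have hθ'' : θ' = g + u := by
        rw [hθ', hωdef]; field_simp; ring
      have h3 : V ≤ θ' := by linarith [hVb.2]
      have h4 : θ' ≤ θ := by push_neg at h2; linarith
      rw [abs_of_nonneg (by linarith), abs_of_nonneg (by linarith)]
      linarith
end
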